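/- Let m(r) = r·√(tanh(r)/r). Then m''(r) < 0 for all r > 0, and moreover there exist constants c, C > 0 such that c·r·(1+r²)^(-5/4) ≤ -m''(r) ≤ C·r·(1+r²)^(-5/4) for all r > 0. -/

import Mathlib

noncomputable def K (r : ℝ) : ℝ := Real.sqrt (Real.tanh r / r)

noncomputable def m (r : ℝ) : ℝ := r * K r

namespace Whitham

noncomputable def g (x : ℝ) : ℝ := Real.sqrt (x * Real.tanh x)
noncomputable def p (x : ℝ) : ℝ := Real.tanh x + x * (1 - Real.tanh x ^ 2)
noncomputable def pp (x : ℝ) : ℝ := 2 * (1 - Real.tanh x ^ 2) * (1 - x * Real.tanh x)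
noncomputable def g1 (x : ℝ) : ℝ := p x / (2 * Real.sqrt (x * Real.tanh x))
noncomputable def G (x : ℝ) : ℝ := p x ^ 2 - 2 * pp x * (x * Real.tanh x)


lemma hasDerivAt_tanh (x : ℝ) : HasDerivAt Real.tanh (1 - Real.tanh x ^ 2) x := by
  have h := (Real.hasDerivAt_sinh x).div (Real.hasDerivAt_cosh x) (Real.cosh_pos x).ne'
  have he : Real.tanh = fun y => Real.sinh y / Real.cosh y :=
    funext fun y => Real.tanh_eq_sinh_div_cosh y
  rw [he]
  refine HasDerivAt.congr_deriv h ?_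
  have hc := (Real.cosh_pos x).ne'
  field_simp

lemma one_sub_tanh_sq (x : ℝ) : 1 - Real.tanh x ^ 2 = 1 / Real.cosh x ^ 2 := by
  rw [Real.tanh_eq_sinh_div_cosh]
  have hc := (Real.cosh_pos x).ne'
  have h2 := Real.cosh_sq_sub_sinh_sq x
  field_simp
  linarith

lemma tanh_pos {x : ℝ} (hx : 0 < x) : 0 < Real.tanh x := by
  rw [Real.tanh_eq_sinh_div_cosh]
  exact div_pos (Real.sinh_pos_iff.2 hx) (Real.cosh_pos x)

lemma tanh_lt_one (x : ℝ) : Real.tanh x < 1 := by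
  rw [Real.tanh_eq_sinh_div_cosh, div_lt_one (Real.cosh_pos x)]
  nlinarith [Real.cosh_sq_sub_sinh_sq x, Real.cosh_pos x]

lemma sinh_le_mul_cosh {x : ℝ} (hx : 0 ≤ x) : Real.sinh x ≤ x * Real.cosh x := by
  have hmono : MonotoneOn (fun y => y * Real.cosh y - Real.sinh y) (Set.Ici (0:ℝ)) := by
    have hd : ∀ y : ℝ, HasDerivAt (fun z => z * Real.cosh z - Real.sinh z)
        (y * Real.sinh y) y := by
      intro y
      have h1 := ((hasDerivAt_id y).mul (Real.hasDerivAt_cosh y)).sub (Real.hasDerivAt_sinh y)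
      refine HasDerivAt.congr_deriv h1 ?_
      simp only [id]
      ring
    refine monotoneOn_of_deriv_nonneg (convex_Ici 0)
      (Continuous.continuousOn (by continuity)) (fun y hy => (hd y).differentiableAt.differentiableWithinAt) ?_
    intro y hy
    rw [interior_Ici] at hy
    rw [(hd y).deriv]
    exact mul_nonneg (le_of_lt hy) (Real.sinh_nonneg_iff.2 (le_of_lt hy))
  have := hmono (Set.mem_Ici.2 le_rfl) (Set.mem_Ici.2 hx) hx
  simpa using this

lemma tanh_le_self {x : ℝ} (hx : 0 ≤ x) : Real.tanh x ≤ x := by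
  rw [Real.tanh_eq_sinh_div_cosh, div_le_iff₀ (Real.cosh_pos x)]
  exact sinh_le_mul_cosh hx

lemma f_pos {x : ℝ} (hx : 0 < x) : 0 < x * Real.tanh x := mul_pos hx (tanh_pos hx)

lemma m_eq_g {x : ℝ} (hx : 0 < x) : m x = g x := by
  have hx' : x ≠ 0 := hx.ne'
  rw [m, K, g]
  rw [show x * Real.sqrt (Real.tanh x / x) = Real.sqrt (x ^ 2) * Real.sqrt (Real.tanh x / x) by
    rw [Real.sqrt_sq hx.le]]
  rw [← Real.sqrt_mul (sq_nonneg x)]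
  congr 1
  field_simp

lemma hasDerivAt_f (x : ℝ) : HasDerivAt (fun y => y * Real.tanh y) (p x) x := by
  have h := (hasDerivAt_id x).mul (hasDerivAt_tanh x)
  refine HasDerivAt.congr_deriv h ?_
  simp only [p, id]
  ring

lemma hasDerivAt_g {x : ℝ} (hx : 0 < x) : HasDerivAt g (g1 x) x :=
  (hasDerivAt_f x).sqrt (f_pos hx).ne'

lemma deriv_m_eq {x : ℝ} (hx : 0 < x) : deriv m x = g1 x := by
  have hev : m =ᶠ[nhds x] g := by
    filter_upwards [isOpen_Ioi.mem_nhds hx] with y hy using m_eq_g hy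
  rw [hev.deriv_eq, (hasDerivAt_g hx).deriv]

lemma hasDerivAt_pp (x : ℝ) : HasDerivAt p (pp x) x := by
  have h2 : HasDerivAt (fun y : ℝ => 1 - Real.tanh y ^ 2)
      (-(2 * Real.tanh x ^ 1 * (1 - Real.tanh x ^ 2))) x :=
    ((hasDerivAt_tanh x).pow 2).const_sub 1
  have h3 := (hasDerivAt_id x).mul h2
  have h := (hasDerivAt_tanh x).add h3
  refine HasDerivAt.congr_deriv h ?_
  simp only [pp, id]
  ring

lemma hasDerivAt_g1 {r : ℝ} (hr : 0 < r) :
    HasDerivAt g1 (-G r / (4 * (r * Real.tanh r) * Real.sqrt (r * Real.tanh r))) r := by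
  have hf := f_pos hr
  have hs0 : 0 < Real.sqrt (r * Real.tanh r) := Real.sqrt_pos.2 hf
  have hsq : Real.sqrt (r * Real.tanh r) ^ 2 = r * Real.tanh r := Real.sq_sqrt hf.le
  have hq : HasDerivAt (fun y => 2 * Real.sqrt (y * Real.tanh y))
      (2 * (p r / (2 * Real.sqrt (r * Real.tanh r)))) r :=
    ((hasDerivAt_f r).sqrt hf.ne').const_mul 2
  have hne : 2 * Real.sqrt (r * Real.tanh r) ≠ 0 := by positivity
  have h := (hasDerivAt_pp r).div hq hne
  set s := Real.sqrt (r * Real.tanh r) with hsdef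
  refine HasDerivAt.congr_deriv h ?_
  rw [G]
  rw [← hsq]
  have hs0' := hs0.ne'
  field_simp
  ring

lemma deriv2_m {r : ℝ} (hr : 0 < r) :
    deriv (deriv m) r = -G r / (4 * (r * Real.tanh r) * Real.sqrt (r * Real.tanh r)) := by
  have hev : deriv m =ᶠ[nhds r] g1 := by
    filter_upwards [isOpen_Ioi.mem_nhds hr] with y hy using deriv_m_eq hy
  rw [hev.deriv_eq, (hasDerivAt_g1 hr).deriv]

lemma G_identity (r : ℝ) : G r = Real.tanh r ^ 4 +
    (1 - Real.tanh r ^ 2) * ((r - Real.tanh r) ^ 2 + 3 * r ^ 2 * Real.tanh r ^ 2) := by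
  simp only [G, p, pp]
  ring

lemma le_of_sq_le_sq {a b : ℝ} (ha : 0 ≤ a) (hb : 0 ≤ b) (h : a ^ 2 ≤ b ^ 2) : a ≤ b := by
  have := Real.sqrt_le_sqrt h
  rwa [Real.sqrt_sq ha, Real.sqrt_sq hb] at this

lemma ineq_ii {r : ℝ} (hr : 0 < r) : r ^ 2 ≤ Real.tanh r ^ 2 * (1 + r ^ 2) := by
  have hc := Real.cosh_pos r
  have hc2 : Real.cosh r ^ 2 = 1 + Real.sinh r ^ 2 := Real.cosh_sq' r
  have hrs : r ≤ Real.sinh r := Real.self_le_sinh_iff.2 hr.le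
  rw [Real.tanh_eq_sinh_div_cosh, div_pow, div_mul_eq_mul_div, le_div_iff₀ (by positivity)]
  nlinarith [hrs, hr.le]

lemma ineq_iii {r : ℝ} (hr : 0 < r) : Real.tanh r ^ 2 * (1 + r ^ 2) ≤ 2 * r ^ 2 := by
  have ht0 := (tanh_pos hr).le
  have ht1 := (tanh_lt_one r).le
  have htr := tanh_le_self hr.le
  nlinarith [pow_le_pow_left₀ ht0 htr 2, pow_le_pow_left₀ ht0 ht1 2, sq_nonneg r]

lemma ineq_iv {r : ℝ} (hr : 0 < r) : r * (1 - Real.tanh r ^ 2) ≤ Real.tanh r := by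
  have hc := Real.cosh_pos r
  have hc1 := Real.one_le_cosh r
  have hrs : r ≤ Real.sinh r := Real.self_le_sinh_iff.2 hr.le
  have hs0 : 0 ≤ Real.sinh r := le_trans hr.le hrs
  rw [one_sub_tanh_sq, Real.tanh_eq_sinh_div_cosh, mul_one_div,
    div_le_div_iff₀ (by positivity) hc]
  nlinarith [mul_le_mul_of_nonneg_right hrs hc.le,
    mul_nonneg (mul_nonneg hs0 hc.le) (sub_nonneg.2 hc1)]

lemma ineq_v {r : ℝ} (hr : 0 < r) : r ^ 2 * (1 - Real.tanh r ^ 2) ≤ Real.tanh r ^ 2 := by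
  have hc := Real.cosh_pos r
  have hrs : r ≤ Real.sinh r := Real.self_le_sinh_iff.2 hr.le
  rw [one_sub_tanh_sq, Real.tanh_eq_sinh_div_cosh, div_pow, mul_one_div,
    div_le_div_iff₀ (by positivity) (by positivity)]
  have hs2 : r ^ 2 ≤ Real.sinh r ^ 2 := by nlinarith
  nlinarith [mul_le_mul_of_nonneg_right hs2 (sq_nonneg (Real.cosh r))]

lemma G_lower {r : ℝ} (hr : 0 < r) : Real.tanh r ^ 4 ≤ G r := by
  have ht0 := (tanh_pos hr).le
  have ht1 := (tanh_lt_one r).le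
  rw [G_identity]
  have h1t : 0 ≤ 1 - Real.tanh r ^ 2 := by nlinarith
  have hX : 0 ≤ (r - Real.tanh r) ^ 2 + 3 * r ^ 2 * Real.tanh r ^ 2 := by positivity
  nlinarith [mul_nonneg h1t hX]

lemma G_upper {r : ℝ} (hr : 0 < r) : G r ≤ 5 * Real.tanh r ^ 4 := by
  set t := Real.tanh r with htdef
  have ht0 := (tanh_pos hr).le
  have ht1 := (tanh_lt_one r).le
  have htr := tanh_le_self hr.le
  have hiv := ineq_iv hr
  have hv := ineq_v hr
  have h1 : 0 ≤ r - t := by linarith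
  have h2 : r - t ≤ r * t ^ 2 := by nlinarith
  have ha : (r - t) ^ 2 ≤ r ^ 2 * t ^ 4 := by nlinarith
  have h1t : 0 ≤ 1 - t ^ 2 := by nlinarith
  have hb : (1 - t ^ 2) * (r - t) ^ 2 ≤ t ^ 2 * t ^ 4 := by
    nlinarith [mul_le_mul_of_nonneg_left ha h1t, mul_le_mul_of_nonneg_right hv (pow_nonneg ht0 4)]
  rw [G_identity]
  nlinarith [mul_le_mul_of_nonneg_right hv (pow_nonneg ht0 2),
    mul_le_mul_of_nonneg_right (show t ^ 2 ≤ 1 by nlinarith) (pow_nonneg ht0 4)]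


end Whitham

open Whitham in
theorem whitham_second_derivative_comparable :
    (∀ r : ℝ, 0 < r → deriv (deriv m) r < 0) ∧
    ∃ c C : ℝ, 0 < c ∧ 0 < C ∧ ∀ r : ℝ, 0 < r →
      c * (r * (1 + r ^ 2) ^ (-(5/4) : ℝ)) ≤ -(deriv (deriv m) r) ∧
      -(deriv (deriv m) r) ≤ C * (r * (1 + r ^ 2) ^ (-(5/4) : ℝ)) := by
  have main : ∀ r : ℝ, 0 < r →
      (1/4 : ℝ) * (r * (1 + r ^ 2) ^ (-(5/4) : ℝ)) ≤ -(deriv (deriv m) r) ∧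
      -(deriv (deriv m) r) ≤ (4 : ℝ) * (r * (1 + r ^ 2) ^ (-(5/4) : ℝ)) := by
    intro r hr
    set t := Real.tanh r with htdef
    have ht0 : 0 < t := tanh_pos hr
    have hf : 0 < r * t := mul_pos hr ht0
    set s := Real.sqrt (r * t) with hsdef
    have hs0 : 0 < s := Real.sqrt_pos.2 hf
    have hs2 : s ^ 2 = r * t := Real.sq_sqrt hf.le
    set Q := Real.sqrt (1 + r ^ 2) with hQdef
    have hQ0 : 0 < Q := Real.sqrt_pos.2 (by positivity)
    have hQ2 : Q ^ 2 = 1 + r ^ 2 := Real.sq_sqrt (by positivity)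
    set P := (1 + r ^ 2) ^ ((5/4 : ℝ)) with hPdef
    have hP0 : 0 < P := Real.rpow_pos_of_pos (by positivity) _
    have hP2 : P ^ 2 = (1 + r ^ 2) ^ 2 * Q := by
      have h1 : P ^ 2 = (1 + r ^ 2) ^ ((5/2 : ℝ)) := by
        rw [hPdef, ← Real.rpow_natCast ((1 + r ^ 2) ^ ((5/4 : ℝ))) 2,
          ← Real.rpow_mul (by positivity : (0:ℝ) ≤ 1 + r ^ 2)]
        norm_num
      rw [h1, show (5/2 : ℝ) = ((2:ℕ) : ℝ) + (1/2 : ℝ) by norm_num,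
        Real.rpow_add (by positivity), Real.rpow_natCast, ← Real.sqrt_eq_rpow]
    have hneg : (1 + r ^ 2) ^ (-(5/4) : ℝ) = P⁻¹ := by
      rw [hPdef, ← Real.rpow_neg (by positivity : (0:ℝ) ≤ 1 + r ^ 2)]
    have hG0 : 0 < G r := lt_of_lt_of_le (pow_pos ht0 4) (G_lower hr)
    have hmm : -(deriv (deriv m) r) = G r / (4 * (r * t) * s) := by
      rw [deriv2_m hr, neg_div, neg_neg]
    have hrtQ : r ≤ t * Q := by
      refine le_of_sq_le_sq hr.le (mul_nonneg ht0.le hQ0.le) ?_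
      rw [mul_pow, hQ2]
      exact ineq_ii hr
    have htQr : t * Q ≤ 3/2 * r := by
      refine le_of_sq_le_sq (mul_nonneg ht0.le hQ0.le) (by positivity) ?_
      rw [mul_pow, hQ2]
      nlinarith [ineq_iii hr, sq_nonneg r]
    have key1 : r * (r * t) * s ≤ G r * P := by
      refine le_of_sq_le_sq (by positivity) (mul_nonneg hG0.le hP0.le) ?_
      have h1 : r ^ 5 ≤ (t * Q) ^ 5 := pow_le_pow_left₀ hr.le hrtQ 5
      have h2 : (t ^ 4) ^ 2 ≤ G r ^ 2 := pow_le_pow_left₀ (by positivity) (G_lower hr) 2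
      have e : (r * (r * t) * s) ^ 2 = r ^ 5 * t ^ 3 := by
        have : (r * (r * t) * s) ^ 2 = r ^ 2 * (r * t) ^ 2 * s ^ 2 := by ring
        rw [this, hs2]; ring
      rw [e]
      calc r ^ 5 * t ^ 3 ≤ (t * Q) ^ 5 * t ^ 3 :=
            mul_le_mul_of_nonneg_right h1 (by positivity)
        _ = (t ^ 4) ^ 2 * ((Q ^ 2) ^ 2 * Q) := by ring
        _ = (t ^ 4) ^ 2 * ((1 + r ^ 2) ^ 2 * Q) := by rw [hQ2]
        _ ≤ G r ^ 2 * ((1 + r ^ 2) ^ 2 * Q) :=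
            mul_le_mul_of_nonneg_right h2 (by positivity)
        _ = (G r * P) ^ 2 := by rw [mul_pow, hP2]
    have key2 : G r * P ≤ 16 * (r * (r * t) * s) := by
      refine le_of_sq_le_sq (mul_nonneg hG0.le hP0.le) (by positivity) ?_
      have h1 : (t * Q) ^ 5 ≤ (3/2 * r) ^ 5 :=
        pow_le_pow_left₀ (mul_nonneg ht0.le hQ0.le) htQr 5
      have h2 : G r ^ 2 ≤ (5 * t ^ 4) ^ 2 := pow_le_pow_left₀ hG0.le (G_upper hr) 2
      have e : (16 * (r * (r * t) * s)) ^ 2 = 256 * (r ^ 5 * t ^ 3) := by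
        have : (16 * (r * (r * t) * s)) ^ 2 = 256 * (r ^ 2 * (r * t) ^ 2 * s ^ 2) := by ring
        rw [this, hs2]; ring
      rw [e]
      calc (G r * P) ^ 2 = G r ^ 2 * ((1 + r ^ 2) ^ 2 * Q) := by rw [mul_pow, hP2]
        _ ≤ (5 * t ^ 4) ^ 2 * ((1 + r ^ 2) ^ 2 * Q) :=
            mul_le_mul_of_nonneg_right h2 (by positivity)
        _ = 25 * t ^ 3 * ((t * Q) ^ 5) := by rw [← hQ2]; ring
        _ ≤ 25 * t ^ 3 * ((3/2 * r) ^ 5) :=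
            mul_le_mul_of_nonneg_left h1 (by positivity)
        _ ≤ 256 * (r ^ 5 * t ^ 3) := by
            nlinarith [mul_nonneg (pow_nonneg hr.le 5) (pow_nonneg ht0.le 3)]
    constructor
    · rw [hmm, hneg]
      have e1 : (1/4 : ℝ) * (r * P⁻¹) = r / (4 * P) := by
        field_simp
      rw [e1, div_le_div_iff₀ (by positivity) (by positivity)]
      nlinarith [key1]
    · rw [hmm, hneg]
      have e2 : (4 : ℝ) * (r * P⁻¹) = 4 * r / P := by
        field_simp
      rw [e2, div_le_div_iff₀ (by positivity) hP0]
      nlinarith [key2]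
  refine ⟨?_, 1/4, 4, by norm_num, by norm_num, main⟩
  intro r hr
  rw [deriv2_m hr]
  have ht0 : 0 < Real.tanh r := tanh_pos hr
  have hf : 0 < r * Real.tanh r := mul_pos hr ht0
  have hG0 : 0 < G r := lt_of_lt_of_le (pow_pos ht0 4) (G_lower hr)
  apply div_neg_of_neg_of_pos
  · linarith
  · have := Real.sqrt_pos.2 hf
    positivity
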